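/- Arctangent subtraction identity: for real w₀, t₀ > 0, s ∈ ℝ, with R⁰ = √(t₀² + w₀²) and R = √(s² + t₀² + w₀²), one has arctan(s/t₀) − arctan(|w₀| s/(t₀ R)) = arctan( t₀ s / ((R⁰)² + |w₀| R) ). -/

import Mathlib

/-- Arctangent subtraction identity (Wilton et al.): with `R⁰ = √(t₀² + w₀²)` and
`R = √(s² + t₀² + w₀²)`,
`arctan(s/t₀) − arctan(|w₀| s/(t₀ R)) = arctan(t₀ s/((R⁰)² + |w₀| R))`. -/
theorem arctan_subtraction_identity (w₀ t₀ s : ℝ) (ht : 0 < t₀) :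
    Real.arctan (s / t₀)
      - Real.arctan (|w₀| * s / (t₀ * Real.sqrt (s ^ 2 + t₀ ^ 2 + w₀ ^ 2)))
      = Real.arctan (t₀ * s /
          ((t₀ ^ 2 + w₀ ^ 2) + |w₀| * Real.sqrt (s ^ 2 + t₀ ^ 2 + w₀ ^ 2))) := by
  rw [show w₀ ^ 2 = |w₀| ^ 2 from (sq_abs w₀).symm]
  set a := |w₀| with hadef
  have ha : 0 ≤ a := abs_nonneg w₀
  clear_value a
  set R := Real.sqrt (s ^ 2 + t₀ ^ 2 + a ^ 2) with hRdef
  have hnn : (0:ℝ) ≤ s ^ 2 + t₀ ^ 2 + a ^ 2 := by positivity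
  have hR2 : R ^ 2 = s ^ 2 + t₀ ^ 2 + a ^ 2 := Real.sq_sqrt hnn
  have hRpos : 0 < R := Real.sqrt_pos.mpr (by nlinarith)
  have ht' : t₀ ≠ 0 := ht.ne'
  have hden : 0 < t₀ ^ 2 + a ^ 2 + a * R := by positivity
  have h0 : (0:ℝ) ≤ (s / t₀) * (a * s / (t₀ * R)) := by
    have : (s / t₀) * (a * s / (t₀ * R)) = a * s ^ 2 / (t₀ ^ 2 * R) := by
      field_simp
    rw [this]; positivity
  have hab : (s / t₀) * (-(a * s / (t₀ * R))) < 1 := by nlinarith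
  have key := Real.arctan_add hab
  rw [Real.arctan_neg] at key
  have harg : (s / t₀ + -(a * s / (t₀ * R))) / (1 - s / t₀ * -(a * s / (t₀ * R)))
      = t₀ * s / (t₀ ^ 2 + a ^ 2 + a * R) := by
    rw [div_eq_div_iff (by nlinarith) hden.ne']
    field_simp
    linear_combination (s * a) * hR2
  rw [harg] at key
  linarith
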